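/- Collision probability of the randomized hash: let Σ be a finite alphabet of size σ ≥ 2, f : Σ → {0,…,σ−1} injective, S ≠ S' two distinct strings over Σ of the same length n, and M ≥ 2 a natural number. Let Q be the (nonempty, by Bertrand's postulate) finite set of primes q with M < q ≤ 2M. If q is drawn uniformly at random from Q, then the probability that f(S) ≡ f(S') (mod q) is at most Nat.log M (σ^n) / |Q|. -/

import Mathlib

/-- The value realization (hash value) of a string `S` over an alphabet with
character values given by `f`, in base `σ`:
`f(S) = ∑_{i=1}^{n} σ^(i-1) · f(S[i])`. -/
def valueRealization {α : Type*} (σ : ℕ) (f : α → ℕ) : List α → ℕ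
  | [] => 0
  | c :: rest => f c + σ * valueRealization σ f rest

/-- The set of primes `q` with `M < q ≤ 2M`. -/
def primesUpToDouble (M : ℕ) : Finset ℕ := (Finset.Ioc M (2 * M)).filter Nat.Prime

private lemma valueRealization_lt {α : Type*} (σ : ℕ) (hσ : 1 ≤ σ) (f : α → ℕ)
    (hfσ : ∀ a : α, f a < σ) : ∀ S : List α, valueRealization σ f S < σ ^ S.length := by
  intro S
  induction S with
  | nil => simpa [valueRealization] using Nat.one_pos
  | cons c rest ih =>
    have h1 : f c + σ * valueRealization σ f rest < σ * (valueRealization σ f rest + 1) := by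
      have := hfσ c; nlinarith
    have h2 : σ * (valueRealization σ f rest + 1) ≤ σ * σ ^ rest.length :=
      Nat.mul_le_mul_left σ ih
    calc valueRealization σ f (c :: rest) = f c + σ * valueRealization σ f rest := rfl
      _ < σ * (valueRealization σ f rest + 1) := h1
      _ ≤ σ * σ ^ rest.length := h2
      _ = σ ^ (c :: rest).length := by rw [List.length_cons, pow_succ, mul_comm]

private lemma valueRealization_inj {α : Type*} (σ : ℕ) (hσ : 1 ≤ σ) (f : α → ℕ)
    (hf : Function.Injective f) (hfσ : ∀ a : α, f a < σ) :
    ∀ S S' : List α, S.length = S'.length →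
      valueRealization σ f S = valueRealization σ f S' → S = S' := by
  intro S
  induction S with
  | nil => intro S' hl _; exact (List.length_eq_zero_iff.mp hl.symm).symm
  | cons c rest ih =>
    intro S' hl hv
    cases S' with
    | nil => simp at hl
    | cons c' rest' =>
      simp only [List.length_cons, Nat.succ.injEq] at hl
      simp only [valueRealization] at hv
      have hσ0 : 0 < σ := hσ
      have hmod : (f c + σ * valueRealization σ f rest) % σ
          = (f c' + σ * valueRealization σ f rest') % σ := by rw [hv]
      rw [Nat.add_mul_mod_self_left, Nat.add_mul_mod_self_left,
        Nat.mod_eq_of_lt (hfσ c), Nat.mod_eq_of_lt (hfσ c')] at hmod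
      have hc : c = c' := hf hmod
      subst hc
      have hrest : valueRealization σ f rest = valueRealization σ f rest' := by
        have := Nat.eq_of_mul_eq_mul_left hσ0 (by omega : σ * valueRealization σ f rest
          = σ * valueRealization σ f rest')
        exact this
      rw [ih rest' hl hrest]

/-- Collision probability of the randomized hash: for distinct strings
`S ≠ S'` of the same length `n`, the set `Q` of primes `q` with `M < q ≤ 2M`
is nonempty (Bertrand's postulate), and the probability over a uniformly
random `q ∈ Q` that `f(S) ≡ f(S') (mod q)` is at most
`Nat.log M (σ^n) / |Q|`. -/
theorem hash_collision_probability_le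
    {α : Type*} [Fintype α] (σ : ℕ) (hσ : 2 ≤ σ) (hcard : Fintype.card α = σ)
    (f : α → ℕ) (hf : Function.Injective f) (hfσ : ∀ a : α, f a < σ)
    (n : ℕ) (S S' : List α) (hS : S.length = n) (hS' : S'.length = n)
    (hne : S ≠ S') (M : ℕ) (hM : 2 ≤ M) :
    (primesUpToDouble M).Nonempty ∧
    (((primesUpToDouble M).filter
        (fun q => valueRealization σ f S % q = valueRealization σ f S' % q)).card : ℝ)
        / (primesUpToDouble M).card
      ≤ (Nat.log M (σ ^ n) : ℝ) / (primesUpToDouble M).card := by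
  obtain ⟨p, hp, hMp, hp2M⟩ := Nat.exists_prime_lt_and_le_two_mul M (by omega)
  have hQne : (primesUpToDouble M).Nonempty :=
    ⟨p, by simp [primesUpToDouble, Finset.mem_filter, Finset.mem_Ioc, hp, hMp, hp2M]⟩
  refine ⟨hQne, ?_⟩
  set a := valueRealization σ f S with ha
  set b := valueRealization σ f S' with hb
  have hab : a ≠ b := fun h => hne (valueRealization_inj σ (by omega) f hf hfσ S S'
    (by rw [hS, hS']) h)
  set d : ℕ := ((b : ℤ) - a).natAbs with hd
  have hd0 : d ≠ 0 := by
    simp only [hd, Int.natAbs_ne_zero, sub_ne_zero, ne_eq, Nat.cast_inj]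
    exact fun h => hab h.symm
  have hda : a < σ ^ n := hS ▸ valueRealization_lt σ (by omega) f hfσ S
  have hdb : b < σ ^ n := hS' ▸ valueRealization_lt σ (by omega) f hfσ S'
  have hdlt : d < σ ^ n := by
    rw [hd]
    rcases Int.natAbs_eq ((b : ℤ) - a) with h | h <;> omega
  set T := (primesUpToDouble M).filter
    (fun q => valueRealization σ f S % q = valueRealization σ f S' % q) with hT
  have hTprime : ∀ q ∈ T, Nat.Prime q := by
    intro q hq
    simp only [hT, primesUpToDouble, Finset.mem_filter] at hq
    exact hq.1.2
  have hTgt : ∀ q ∈ T, M < q := by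
    intro q hq
    simp only [hT, primesUpToDouble, Finset.mem_filter, Finset.mem_Ioc] at hq
    exact hq.1.1.1
  have hTdvd : ∀ q ∈ T, q ∣ d := by
    intro q hq
    simp only [hT, Finset.mem_filter] at hq
    have hmod : a ≡ b [MOD q] := hq.2
    have := hmod.dvd
    have : (q : ℤ) ∣ (b : ℤ) - a := this
    simpa [hd] using Int.natAbs_dvd_natAbs.mpr this
  have hprod_dvd : (∏ q ∈ T, q) ∣ d :=
    Finset.prod_primes_dvd d (fun q hq => (hTprime q hq).prime) hTdvd
  have hprod_le : (∏ q ∈ T, q) ≤ d := Nat.le_of_dvd (Nat.pos_of_ne_zero hd0) hprod_dvd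
  have hpow_le : M ^ T.card ≤ ∏ q ∈ T, q :=
    Finset.pow_card_le_prod T _ _ (fun q hq => (hTgt q hq).le)
  have hcardT : T.card ≤ Nat.log M (σ ^ n) := by
    have hMpow : M ^ T.card ≤ σ ^ n := le_trans (le_trans hpow_le hprod_le) hdlt.le
    exact (Nat.le_log_iff_pow_le (by omega) (by positivity)).mpr hMpow
  have hQpos : (0 : ℝ) < (primesUpToDouble M).card := by
    exact_mod_cast Finset.card_pos.mpr hQne
  gcongr <;> exact_mod_cast hcardT
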